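/- arXiv:1302.0597 — 3 statements merged into one kernel-verified Lean document; each statement's English description precedes it below -/
import Mathlib

section
/- Suppose μ(X) < ∞ and the operator T = M_w E M_u : f ↦ w·E(u f) is bounded on L²(Σ) with operator norm ‖T‖. Then (E(|w|²))^{1/2}·(E(|u|²))^{1/2} ≤ ‖T‖ almost everywhere; in particular (E(|w|²))^{1/2}·(E(|u|²))^{1/2} ∈ L^∞(𝒜) and ‖(E(|w|²))^{1/2}·(E(|u|²))^{1/2}‖_∞ ≤ ‖T‖. -/
open MeasureTheory
open scoped ENNReal

private lemma norm_sq_L2 {X : Type*} {m0 : MeasurableSpace X} {μ : Measure X}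
    (F : Lp ℂ 2 μ) : ‖F‖ ^ 2 = ∫ x, ‖F x‖ ^ 2 ∂μ := by
  have h := norm_sq_eq_re_inner (𝕜 := ℂ) F
  rw [MeasureTheory.L2.inner_def] at h
  simp_rw [inner_self_eq_norm_sq_to_K, ← RCLike.ofReal_pow] at h
  rw [integral_ofReal] at h
  simpa using h

private lemma condExp_ofReal' {X : Type*} {m m0 : MeasurableSpace X} (hm : m ≤ m0)
    {μ : Measure X} [SigmaFinite (μ.trim hm)] {f : X → ℝ} (hf : Integrable f μ) :
    (μ[fun x => ((f x : ℂ))|m]) =ᵐ[μ] fun x => (((μ[f|m]) x : ℂ)) := by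
  refine (ae_eq_condExp_of_forall_setIntegral_eq hm hf.ofReal
    (fun s _ _ => (integrable_condExp.ofReal).integrableOn)
    (fun s hs hμs => ?_) ?_).symm
  · rw [integral_complex_ofReal, integral_complex_ofReal, setIntegral_condExp hm hf hs]
  · exact (Complex.continuous_ofReal.comp_stronglyMeasurable
      stronglyMeasurable_condExp).aestronglyMeasurable

private lemma core_ineq {X : Type*} {m m0 : MeasurableSpace X} (hm : m ≤ m0)
    (μ : Measure X) [IsFiniteMeasure μ] [SigmaFinite (μ.trim hm)]
    (u w : X → ℂ) (hu : Measurable u) (hw : Measurable w)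
    (T : Lp ℂ 2 μ →L[ℂ] Lp ℂ 2 μ)
    (hT : ∀ f : Lp ℂ 2 μ, ⇑(T f) =ᵐ[μ] fun x => w x * (μ[fun y => u y * f y|m]) x)
    (hu2 : Integrable (fun y => ‖u y‖ ^ 2) μ) (hw2 : Integrable (fun y => ‖w y‖ ^ 2) μ)
    {A : Set X} (hA : MeasurableSet[m] A) {n : ℝ}
    (hbd : ∀ x ∈ A, |(μ[fun y => ‖u y‖ ^ 2|m]) x| ≤ n) :
    ∫ x in A, (μ[fun y => ‖w y‖ ^ 2|m]) x * (μ[fun y => ‖u y‖ ^ 2|m]) x ^ 2 ∂μ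
      ≤ ‖T‖ ^ 2 * ∫ x in A, (μ[fun y => ‖u y‖ ^ 2|m]) x ∂μ := by
  set gu : X → ℝ := μ[fun y => ‖u y‖ ^ 2|m] with hgu_def
  set gw : X → ℝ := μ[fun y => ‖w y‖ ^ 2|m] with hgw_def
  have hgu_sm : StronglyMeasurable[m] gu := stronglyMeasurable_condExp
  have hgw_sm : StronglyMeasurable[m] gw := stronglyMeasurable_condExp
  have hA0 : MeasurableSet A := hm _ hA
  -- the test function
  set f : X → ℂ := A.indicator (fun x => (starRingEnd ℂ) (u x)) with hf_def
  have hf_meas : AEStronglyMeasurable f μ := by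
    have : Measurable f := Measurable.indicator (continuous_star.measurable.comp hu) hA0
    exact this.aestronglyMeasurable
  have hf_sq : (fun x => ‖f x‖ ^ 2) = A.indicator (fun x => ‖u x‖ ^ 2) := by
    funext x
    simp only [hf_def]
    by_cases hx : x ∈ A
    · rw [Set.indicator_of_mem hx, Set.indicator_of_mem hx, RCLike.norm_conj]
    · rw [Set.indicator_of_notMem hx, Set.indicator_of_notMem hx, norm_zero]
      ring
  have hf2 : MemLp f 2 μ := by
    rw [memLp_two_iff_integrable_sq_norm hf_meas, hf_sq]
    exact hu2.indicator hA0
  set F : Lp ℂ 2 μ := hf2.toLp f with hF_def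
  have hF_coe : ⇑F =ᵐ[μ] f := hf2.coeFn_toLp
  -- ‖F‖² = ∫_A gu
  have hFnorm : ‖F‖ ^ 2 = ∫ x in A, gu x ∂μ := by
    have h1 : (fun x => ‖F x‖ ^ 2) =ᵐ[μ] fun x => ‖f x‖ ^ 2 := by
      filter_upwards [hF_coe] with x hx
      rw [hx]
    rw [norm_sq_L2 F, integral_congr_ae h1, hf_sq,
      integral_indicator hA0, setIntegral_condExp hm hu2 hA]
  -- identify T F
  have huf : (fun y => u y * f y) = A.indicator (fun y => ((‖u y‖ ^ 2 : ℝ) : ℂ)) := by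
    funext y
    simp only [hf_def]
    by_cases hy : y ∈ A
    · rw [Set.indicator_of_mem hy, Set.indicator_of_mem hy, Complex.mul_conj,
        Complex.normSq_eq_norm_sq]
    · rw [Set.indicator_of_notMem hy, Set.indicator_of_notMem hy, mul_zero]
  have hce : (μ[fun y => u y * F y|m]) =ᵐ[μ] A.indicator (fun y => ((gu y : ℂ))) := by
    have h1 : (fun y => u y * F y) =ᵐ[μ] fun y => u y * f y := by
      filter_upwards [hF_coe] with y hy
      simp only [hy]
    refine (condExp_congr_ae h1).trans ?_
    rw [huf]
    refine (condExp_indicator hu2.ofReal hA).trans ?_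
    filter_upwards [condExp_ofReal' hm hu2] with y hy
    by_cases hyA : y ∈ A
    · rw [Set.indicator_of_mem hyA, Set.indicator_of_mem hyA]
      exact hy
    · rw [Set.indicator_of_notMem hyA, Set.indicator_of_notMem hyA]
  have hTF : ⇑(T F) =ᵐ[μ] fun x => w x * A.indicator (fun y => ((gu y : ℂ))) x := by
    filter_upwards [hT F, hce] with x hx1 hx2
    simp only [hx1, hx2]
  -- ‖T F‖² = ∫ ‖w‖² · ind gu²
  have hTFnorm : ‖T F‖ ^ 2 = ∫ x, A.indicator (fun y => gu y ^ 2) x * ‖w x‖ ^ 2 ∂μ := by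
    rw [norm_sq_L2 (T F)]
    refine integral_congr_ae ?_
    filter_upwards [hTF] with x hx
    rw [show ((T F : Lp ℂ 2 μ) : X → ℂ) x = w x * A.indicator (fun y => ((gu y : ℂ))) x from hx]
    by_cases hxA : x ∈ A
    · rw [Set.indicator_of_mem hxA, Set.indicator_of_mem hxA, norm_mul, mul_pow,
        Complex.norm_real, Real.norm_eq_abs, sq_abs, mul_comm]
    · rw [Set.indicator_of_notMem hxA, Set.indicator_of_notMem hxA, mul_zero, norm_zero,
        zero_mul]
      ring
  -- pull-out
  have hφ_sm : StronglyMeasurable[m] (A.indicator (fun y => gu y ^ 2)) :=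
    (hgu_sm.pow 2).indicator hA
  have hφ_bdd : ∀ᵐ x ∂μ, ‖A.indicator (fun y => gu y ^ 2) x‖ ≤ n ^ 2 := by
    refine Filter.Eventually.of_forall fun x => ?_
    by_cases hx : x ∈ A
    · rw [Set.indicator_of_mem hx, Real.norm_eq_abs, abs_pow]
      exact pow_le_pow_left₀ (abs_nonneg _) (hbd x hx) 2
    · rw [Set.indicator_of_notMem hx, norm_zero]
      positivity
  have hφw_int : Integrable (fun x => A.indicator (fun y => gu y ^ 2) x * ‖w x‖ ^ 2) μ :=
    Integrable.bdd_mul hw2 ((hφ_sm.mono hm).aestronglyMeasurable) hφ_bdd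
  have hmul : (μ[(A.indicator fun y => gu y ^ 2) * fun y => ‖w y‖ ^ 2|m]) =ᵐ[μ]
      (A.indicator fun y => gu y ^ 2) * gw :=
    condExp_mul_of_stronglyMeasurable_left hφ_sm hφw_int hw2
  have hint_eq : ∫ x, A.indicator (fun y => gu y ^ 2) x * ‖w x‖ ^ 2 ∂μ
      = ∫ x in A, gw x * gu x ^ 2 ∂μ := by
    have h1 : ∫ x, A.indicator (fun y => gu y ^ 2) x * ‖w x‖ ^ 2 ∂μ
        = ∫ x, (μ[(A.indicator fun y => gu y ^ 2) * fun y => ‖w y‖ ^ 2|m]) x ∂μ :=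
      (integral_condExp hm).symm
    rw [h1, integral_congr_ae hmul]
    have h2 : ((A.indicator fun y => gu y ^ 2) * gw) = A.indicator (fun x => gw x * gu x ^ 2) := by
      funext x
      by_cases hx : x ∈ A
      · simp only [Pi.mul_apply, Set.indicator_of_mem hx, mul_comm]
      · simp only [Pi.mul_apply, Set.indicator_of_notMem hx, zero_mul]
    rw [h2, integral_indicator hA0]
  -- combine
  have hineq : ‖T F‖ ^ 2 ≤ ‖T‖ ^ 2 * ‖F‖ ^ 2 := by
    have := T.le_opNorm F
    nlinarith [norm_nonneg (T F), norm_nonneg F, norm_nonneg T]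
  calc ∫ x in A, gw x * gu x ^ 2 ∂μ = ‖T F‖ ^ 2 := by rw [hTFnorm, hint_eq]
    _ ≤ ‖T‖ ^ 2 * ‖F‖ ^ 2 := hineq
    _ = ‖T‖ ^ 2 * ∫ x in A, gu x ∂μ := by rw [hFnorm]

private lemma ae_step {X : Type*} {m m0 : MeasurableSpace X} (hm : m ≤ m0)
    (μ : Measure X) [IsFiniteMeasure μ] [SigmaFinite (μ.trim hm)]
    (u w : X → ℂ) (hu : Measurable u) (hw : Measurable w)
    (T : Lp ℂ 2 μ →L[ℂ] Lp ℂ 2 μ)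
    (hT : ∀ f : Lp ℂ 2 μ, ⇑(T f) =ᵐ[μ] fun x => w x * (μ[fun y => u y * f y|m]) x)
    (hu2 : Integrable (fun y => ‖u y‖ ^ 2) μ) (hw2 : Integrable (fun y => ‖w y‖ ^ 2) μ)
    (n : ℕ) :
    ∀ᵐ x ∂μ, |(μ[fun y => ‖u y‖ ^ 2|m]) x| ≤ (n : ℝ) →
      (μ[fun y => ‖w y‖ ^ 2|m]) x * (μ[fun y => ‖u y‖ ^ 2|m]) x ^ 2
        ≤ ‖T‖ ^ 2 * (μ[fun y => ‖u y‖ ^ 2|m]) x := by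
  set gu : X → ℝ := μ[fun y => ‖u y‖ ^ 2|m] with hgu_def
  set gw : X → ℝ := μ[fun y => ‖w y‖ ^ 2|m] with hgw_def
  have hgu_sm : StronglyMeasurable[m] gu := stronglyMeasurable_condExp
  have hgw_sm : StronglyMeasurable[m] gw := stronglyMeasurable_condExp
  set B : Set X := {x | |gu x| ≤ (n : ℝ)} with hB_def
  have hB : MeasurableSet[m] B :=
    hgu_sm.norm.measurableSet_le stronglyMeasurable_const
  set h : X → ℝ := B.indicator (fun x => ‖T‖ ^ 2 * gu x - gw x * gu x ^ 2) with hh_def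
  have hsm : StronglyMeasurable[m] h :=
    ((hgu_sm.const_mul _).sub (hgw_sm.mul (hgu_sm.pow 2))).indicator hB
  -- integrability of h
  have hBind_bdd : ∀ᵐ x ∂μ, ‖B.indicator (fun y => gu y ^ 2) x‖ ≤ (n : ℝ) ^ 2 := by
    refine Filter.Eventually.of_forall fun x => ?_
    by_cases hx : x ∈ B
    · rw [Set.indicator_of_mem hx, Real.norm_eq_abs, abs_pow]
      exact pow_le_pow_left₀ (abs_nonneg _) hx 2
    · rw [Set.indicator_of_notMem hx, norm_zero]
      positivity
  have h2int : Integrable (fun x => B.indicator (fun y => gu y ^ 2) x * gw x) μ :=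
    Integrable.bdd_mul integrable_condExp
      (((hgu_sm.pow 2).indicator hB).mono hm).aestronglyMeasurable hBind_bdd
  have hsplit : h = fun x => B.indicator (fun y => ‖T‖ ^ 2 * gu y) x
      - B.indicator (fun y => gu y ^ 2) x * gw x := by
    funext x
    by_cases hx : x ∈ B
    · simp only [hh_def, Set.indicator_of_mem hx]
      ring
    · simp only [hh_def, Set.indicator_of_notMem hx, zero_mul, sub_zero]
  have hint : Integrable h μ := by
    rw [hsplit]
    exact ((integrable_condExp.const_mul _).indicator (hm _ hB)).sub h2int
  -- the set-integral nonnegativity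
  have hkey : ∀ s, MeasurableSet[m] s → μ.trim hm s < ∞ →
      0 ≤ ∫ x in s, h x ∂(μ.trim hm) := by
    intro s hs _
    rw [← setIntegral_trim hm hsm hs]
    have hsB : MeasurableSet[m] (s ∩ B) := hs.inter hB
    have e1 : ∫ x in s, h x ∂μ
        = ∫ x in s ∩ B, (‖T‖ ^ 2 * gu x - gw x * gu x ^ 2) ∂μ := by
      rw [hh_def, setIntegral_indicator (hm _ hB)]
    have hi1 : IntegrableOn (fun x => ‖T‖ ^ 2 * gu x) (s ∩ B) μ :=
      (integrable_condExp.const_mul _).integrableOn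
    have hi2 : IntegrableOn (fun x => gw x * gu x ^ 2) (s ∩ B) μ := by
      refine (h2int.integrableOn (s := s ∩ B)).congr_fun ?_ (hm _ hsB)
      intro x hx
      simp only [Set.indicator_of_mem hx.2]
      ring
    have e2 : ∫ x in s ∩ B, (‖T‖ ^ 2 * gu x - gw x * gu x ^ 2) ∂μ
        = ‖T‖ ^ 2 * ∫ x in s ∩ B, gu x ∂μ - ∫ x in s ∩ B, gw x * gu x ^ 2 ∂μ := by
      rw [integral_sub hi1 hi2, integral_const_mul]
    have hcore := core_ineq hm μ u w hu hw T hT hu2 hw2 hsB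
      (n := (n : ℝ)) (fun x hx => hx.2)
    rw [e1, e2]
    linarith
  have htrim : 0 ≤ᵐ[μ.trim hm] h := by
    refine ae_nonneg_of_forall_setIntegral_nonneg (hint.trim hm hsm) ?_
    intro s hs hμs
    exact hkey s hs hμs
  have hμae : 0 ≤ᵐ[μ] h := ae_le_of_ae_le_trim htrim
  filter_upwards [hμae] with x hx hxB
  have hxB' : x ∈ B := hxB
  rw [hh_def, Set.indicator_of_mem hxB'] at hx
  simp only [Pi.zero_apply] at hx
  linarith

/-- Suppose `μ(X) < ∞` and the operator `T = M_w E M_u :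
f ↦ w·E(u f)` is bounded on `L²(Σ)` with operator norm `‖T‖`.  Then
`(E(|w|²))^{1/2}·(E(|u|²))^{1/2} ≤ ‖T‖` almost everywhere; in particular
`(E(|w|²))^{1/2}·(E(|u|²))^{1/2} ∈ L^∞(𝒜)` and
`‖(E(|w|²))^{1/2}·(E(|u|²))^{1/2}‖_∞ ≤ ‖T‖`. -/
theorem stmt_2 {X : Type*} {m m0 : MeasurableSpace X} (hm : m ≤ m0)
    (μ : Measure X) [IsFiniteMeasure μ] [SigmaFinite (μ.trim hm)]
    (u w : X → ℂ) (hu : Measurable u) (hw : Measurable w)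
    (T : Lp ℂ 2 μ →L[ℂ] Lp ℂ 2 μ)
    (hT : ∀ f : Lp ℂ 2 μ, ⇑(T f) =ᵐ[μ] fun x => w x * (μ[fun y => u y * f y|m]) x) :
    (∀ᵐ x ∂μ, Real.sqrt ((μ[fun y => ‖w y‖ ^ 2|m]) x) *
      Real.sqrt ((μ[fun y => ‖u y‖ ^ 2|m]) x) ≤ ‖T‖) ∧
    MemLp (fun x => Real.sqrt ((μ[fun y => ‖w y‖ ^ 2|m]) x) *
      Real.sqrt ((μ[fun y => ‖u y‖ ^ 2|m]) x)) ∞ μ ∧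
    eLpNorm (fun x => Real.sqrt ((μ[fun y => ‖w y‖ ^ 2|m]) x) *
      Real.sqrt ((μ[fun y => ‖u y‖ ^ 2|m]) x)) ∞ μ ≤ ENNReal.ofReal ‖T‖ := by
  -- first, an a.e. bound `H`
  have H : ∀ᵐ x ∂μ, Real.sqrt ((μ[fun y => ‖w y‖ ^ 2|m]) x) *
      Real.sqrt ((μ[fun y => ‖u y‖ ^ 2|m]) x) ≤ ‖T‖ := by
    by_cases hu2 : Integrable (fun y => ‖u y‖ ^ 2) μ
    swap
    · simp only [condExp_of_not_integrable hu2, Pi.zero_apply, Real.sqrt_zero, mul_zero]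
      exact Filter.Eventually.of_forall fun _ => norm_nonneg T
    by_cases hw2 : Integrable (fun y => ‖w y‖ ^ 2) μ
    swap
    · simp only [condExp_of_not_integrable hw2, Pi.zero_apply, Real.sqrt_zero, zero_mul]
      exact Filter.Eventually.of_forall fun _ => norm_nonneg T
    have hgu0 : 0 ≤ᵐ[μ] μ[fun y => ‖u y‖ ^ 2|m] :=
      condExp_nonneg (Filter.Eventually.of_forall fun y => by positivity)
    have hgw0 : 0 ≤ᵐ[μ] μ[fun y => ‖w y‖ ^ 2|m] :=
      condExp_nonneg (Filter.Eventually.of_forall fun y => by positivity)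
    have hall : ∀ᵐ x ∂μ, ∀ n : ℕ, |(μ[fun y => ‖u y‖ ^ 2|m]) x| ≤ (n : ℝ) →
        (μ[fun y => ‖w y‖ ^ 2|m]) x * (μ[fun y => ‖u y‖ ^ 2|m]) x ^ 2
          ≤ ‖T‖ ^ 2 * (μ[fun y => ‖u y‖ ^ 2|m]) x :=
      ae_all_iff.2 fun n => ae_step hm μ u w hu hw T hT hu2 hw2 n
    filter_upwards [hall, hgu0, hgw0] with x hx hgu hgw
    simp only [Pi.zero_apply] at hgu hgw
    set a : ℝ := (μ[fun y => ‖u y‖ ^ 2|m]) x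
    set b : ℝ := (μ[fun y => ‖w y‖ ^ 2|m]) x
    obtain ⟨n, hn⟩ := exists_nat_ge |a|
    have key : b * a ^ 2 ≤ ‖T‖ ^ 2 * a := hx n hn
    rcases eq_or_lt_of_le hgu with h0 | hpos
    · rw [← h0, Real.sqrt_zero, mul_zero]
      exact norm_nonneg T
    · have h1 : b * a ≤ ‖T‖ ^ 2 := by
        have h2 : (b * a) * a ≤ ‖T‖ ^ 2 * a := by nlinarith [key]
        exact le_of_mul_le_mul_right h2 hpos
      calc Real.sqrt b * Real.sqrt a = Real.sqrt (b * a) := (Real.sqrt_mul hgw _).symm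
        _ ≤ Real.sqrt (‖T‖ ^ 2) := Real.sqrt_le_sqrt h1
        _ = ‖T‖ := Real.sqrt_sq (norm_nonneg T)
  -- measurability
  have hmeas : AEStronglyMeasurable (fun x => Real.sqrt ((μ[fun y => ‖w y‖ ^ 2|m]) x) *
      Real.sqrt ((μ[fun y => ‖u y‖ ^ 2|m]) x)) μ := by
    have h1 : Measurable (μ[fun y => ‖w y‖ ^ 2|m]) :=
      (stronglyMeasurable_condExp.mono hm).measurable
    have h2 : Measurable (μ[fun y => ‖u y‖ ^ 2|m]) :=
      (stronglyMeasurable_condExp.mono hm).measurable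
    exact (((Real.continuous_sqrt.measurable.comp h1).mul
      (Real.continuous_sqrt.measurable.comp h2))).aestronglyMeasurable
  have hbd : ∀ᵐ x ∂μ, ‖Real.sqrt ((μ[fun y => ‖w y‖ ^ 2|m]) x) *
      Real.sqrt ((μ[fun y => ‖u y‖ ^ 2|m]) x)‖ ≤ ‖T‖ := by
    filter_upwards [H] with x hx
    rwa [Real.norm_eq_abs,
      abs_of_nonneg (mul_nonneg (Real.sqrt_nonneg _) (Real.sqrt_nonneg _))]
  refine ⟨H, memLp_top_of_bound hmeas _ hbd, ?_⟩
  rw [eLpNorm_exponent_top]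
  exact eLpNormEssSup_le_of_ae_bound hbd
end

section
/- Let g ∈ L^∞(𝒜) and let T = M_w E M_u : f ↦ w·E(u f) be bounded on L²(Σ). If M_g T = 0 (i.e. g·w·E(u f) = 0 for all f ∈ L²(Σ)), then g = 0 almost everywhere on the support σ(E(|w|²)·E(|u|²)) = {x : E(|w|²)(x)·E(|u|²)(x) ≠ 0}. -/
open MeasureTheory
open scoped ENNReal

lemma condexp_ofReal_aux {X : Type*} {m m0 : MeasurableSpace X} (hm : m ≤ m0)
    (μ : Measure X) [SigmaFinite (μ.trim hm)] {f : X → ℝ} (hf : Integrable f μ) :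
    (fun x => ((μ[f|m]) x : ℂ)) =ᵐ[μ] μ[fun x => ((f x : ℝ) : ℂ)|m] := by
  refine ae_eq_condExp_of_forall_setIntegral_eq hm hf.ofReal ?_ ?_ ?_
  · intro s _ _
    exact (integrable_condExp.integrableOn).ofReal
  · intro s hs hμs
    have h1 := Complex.ofRealCLM.integral_comp_comm
      (integrable_condExp (f := f) (m := m) (μ := μ)).integrableOn (μ := μ.restrict s)
    have h2 := Complex.ofRealCLM.integral_comp_comm hf.integrableOn (μ := μ.restrict s)
    simp only [Complex.ofRealCLM_apply] at h1 h2
    rw [h1, h2, setIntegral_condExp hm hf hs]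
  · exact (Complex.continuous_ofReal.comp_stronglyMeasurable
      stronglyMeasurable_condExp).aestronglyMeasurable

/-- Let `g ∈ L^∞(𝒜)` and let `T = M_w E M_u : f ↦ w·E(u f)` be
bounded on `L²(Σ)`.  If `M_g T = 0` (i.e. `g·w·E(u f) = 0` a.e. for all
`f ∈ L²(Σ)`), then `g = 0` almost everywhere on the support
`σ(E(|w|²)·E(|u|²)) = {x : E(|w|²)(x)·E(|u|²)(x) ≠ 0}`. -/
theorem stmt_3 {X : Type*} {m m0 : MeasurableSpace X} (hm : m ≤ m0)
    (μ : Measure X) [SigmaFinite μ] [SigmaFinite (μ.trim hm)]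
    (u w : X → ℂ) (hu : Measurable u) (hw : Measurable w)
    (g : X → ℂ) (hgm : Measurable[m] g) (hg : MemLp g ∞ μ)
    (T : Lp ℂ 2 μ →L[ℂ] Lp ℂ 2 μ)
    (hT : ∀ f : Lp ℂ 2 μ, ⇑(T f) =ᵐ[μ] fun x => w x * (μ[fun y => u y * f y|m]) x)
    (hMgT : ∀ f : Lp ℂ 2 μ, (fun x => g x * T f x) =ᵐ[μ] 0) :
    ∀ᵐ x ∂μ, (μ[fun y => ‖w y‖ ^ 2|m]) x * (μ[fun y => ‖u y‖ ^ 2|m]) x ≠ 0 →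
      g x = 0 := by
  by_cases hu2 : Integrable (fun y => ‖u y‖ ^ 2) μ
  swap
  · refine Filter.Eventually.of_forall fun x => ?_
    rw [condExp_of_not_integrable hu2]
    simp
  by_cases hw2 : Integrable (fun y => ‖w y‖ ^ 2) μ
  swap
  · refine Filter.Eventually.of_forall fun x => ?_
    rw [condExp_of_not_integrable hw2]
    simp
  -- the test function `f = conj u ∈ L²`
  have hucm : AEStronglyMeasurable (fun y => (starRingEnd ℂ) (u y)) μ :=
    Complex.continuous_conj.comp_stronglyMeasurable hu.stronglyMeasurable
      |>.aestronglyMeasurable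
  have hmem : MemLp (fun y => (starRingEnd ℂ) (u y)) 2 μ := by
    rw [memLp_two_iff_integrable_sq_norm hucm]
    simpa using hu2
  set f : Lp ℂ 2 μ := hmem.toLp _ with hfdef
  have hf : ⇑f =ᵐ[μ] fun y => (starRingEnd ℂ) (u y) := hmem.coeFn_toLp
  set Eu : X → ℝ := μ[fun y => ‖u y‖ ^ 2|m] with hEudef
  set Ew : X → ℝ := μ[fun y => ‖w y‖ ^ 2|m] with hEwdef
  -- identify E(u f) with (Eu : ℂ)
  have h1 : (fun y => u y * f y) =ᵐ[μ] fun y => (((‖u y‖ ^ 2 : ℝ) : ℂ)) := by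
    filter_upwards [hf] with y hy
    rw [hy, Complex.mul_conj, Complex.normSq_eq_norm_sq]
  have h2 : μ[fun y => u y * f y|m] =ᵐ[μ] fun x => ((Eu x : ℝ) : ℂ) :=
    (condExp_congr_ae h1).trans (condexp_ofReal_aux hm μ hu2).symm
  -- the basic a.e. identity: g·w·Eu = 0
  have hEq : ∀ᵐ x ∂μ, g x * (w x * ((Eu x : ℝ) : ℂ)) = 0 := by
    filter_upwards [hMgT f, hT f, h2] with x hx1 hx2 hx3
    rw [← hx3, ← hx2]
    simpa using hx1
  -- the support set of Eu
  have hs : MeasurableSet[m] {x | Eu x ≠ 0} :=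
    stronglyMeasurable_condExp.measurable (measurableSet_singleton (0 : ℝ)).compl
  set φ : X → ℝ := fun x => ‖g x‖ ^ 2 * ({x | Eu x ≠ 0}).indicator (fun _ => (1 : ℝ)) x
    with hφdef
  have hφm : Measurable[m] φ := by
    have h1 : Measurable[m] fun x => ‖g x‖ ^ 2 := by fun_prop
    have h2 : Measurable[m] (({x | Eu x ≠ 0}).indicator (fun _ => (1 : ℝ))) :=
      measurable_const.indicator hs
    exact h1.mul h2
  have hφ : StronglyMeasurable[m] φ := hφm.stronglyMeasurable
  set F : X → ℝ := φ * fun x => ‖w x‖ ^ 2 with hFdef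
  have hF0 : F =ᵐ[μ] 0 := by
    filter_upwards [hEq] with x hx
    by_cases hxs : Eu x ≠ 0
    · have : g x * w x = 0 := by
        have hne : ((Eu x : ℝ) : ℂ) ≠ 0 := by exact_mod_cast hxs
        have := hx
        rw [← mul_assoc] at this
        exact (mul_eq_zero.1 this).resolve_right hne
      rcases mul_eq_zero.1 this with h | h <;>
        simp [hFdef, hφdef, Pi.mul_apply, h]
    · simp only [not_not] at hxs
      simp [hFdef, hφdef, Set.indicator_of_notMem, hxs]
  have hFint : Integrable F μ := (integrable_zero _ _ _).congr hF0.symm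
  have hmul : μ[F|m] =ᵐ[μ] φ * μ[fun x => ‖w x‖ ^ 2|m] :=
    condExp_mul_of_stronglyMeasurable_left hφ hFint hw2
  have hzero : μ[F|m] =ᵐ[μ] 0 := by
    have := condExp_congr_ae (m := m) (μ := μ) hF0
    rwa [condExp_zero] at this
  have hfin : (φ * Ew) =ᵐ[μ] 0 := hmul.symm.trans hzero
  filter_upwards [hfin] with x hx hne
  have hEu : Eu x ≠ 0 := fun h => hne (by rw [h, mul_zero])
  have hEw : Ew x ≠ 0 := fun h => hne (by rw [h, zero_mul])
  have hx' : ‖g x‖ ^ 2 * Ew x = 0 := by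
    have : φ x * Ew x = 0 := by simpa using hx
    simpa [hφdef, Set.indicator_of_mem, hEu] using this
  have : ‖g x‖ ^ 2 = 0 := (mul_eq_zero.1 hx').resolve_right hEw
  simpa using (pow_eq_zero_iff (n := 2) (by norm_num)).1 (by simpa using this)
end

section
/- Let φ : X → X be a nonsingular measurable transformation such that φ^{-1}(Σ) is a sub-σ-algebra of Σ with σ-finite restricted measure, and for S ∈ Σ let ℰ(S)(f) = E^φ(χ_{φ^{-1}(S)}·f) on L²(Σ). If {S_n}_{n≥0} is a sequence of pairwise disjoint sets in Σ, then for every f ∈ L²(Σ), ℰ(⋃_{n≥0} S_n)(f) = Σ_{n=0}^∞ ℰ(S_n)(f), the series converging in L²(Σ); i.e. ℰ is countably additive in the strong operator topology. -/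
open MeasureTheory Filter
open scoped ENNReal Topology

/-- Let `φ : X → X` be a nonsingular measurable transformation
such that `φ⁻¹(Σ)` is a sub-σ-algebra of `Σ` with σ-finite restricted measure,
and for `S ∈ Σ` let `ℰ(S)(f) = E^φ(χ_{φ⁻¹(S)}·f)` on `L²(Σ)`.  If `{S_n}` is a
sequence of pairwise disjoint sets in `Σ`, then for every `f ∈ L²(Σ)`,
`ℰ(⋃ₙ Sₙ)(f) = Σ_{n=0}^∞ ℰ(Sₙ)(f)`, the series converging in `L²(Σ)`;
i.e. `ℰ` is countably additive in the strong operator topology. -/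
theorem stmt_18 {X : Type*} {m0 : MeasurableSpace X}
    (μ : Measure X) [SigmaFinite μ]
    (φ : X → X) (hφ : Measurable φ) (hns : μ.map φ ≪ μ)
    (hm : MeasurableSpace.comap φ m0 ≤ m0)
    [SigmaFinite (μ.trim hm)]
    (ℰ : Set X → (Lp ℂ 2 μ →L[ℂ] Lp ℂ 2 μ))
    (hℰ : ∀ S : Set X, MeasurableSet S → ∀ f : Lp ℂ 2 μ,
      ⇑(ℰ S f) =ᵐ[μ]
        μ[fun y => (φ ⁻¹' S).indicator (fun _ => (1 : ℂ)) y * f y|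
          MeasurableSpace.comap φ m0])
    (S : ℕ → Set X) (hS : ∀ n, MeasurableSet (S n))
    (hdisj : Pairwise (Function.onFun Disjoint S)) :
    ∀ f : Lp ℂ 2 μ,
      Tendsto (fun N => ∑ n ∈ Finset.range N, ℰ (S n) f) atTop
        (𝓝 (ℰ (⋃ n, S n) f)) := by
  classical
  have ind_eq : ∀ (A : Set X) (g : X → ℂ),
      (fun y => A.indicator (fun _ => (1 : ℂ)) y * g y) = A.indicator g := by
    intro A g; funext y
    by_cases h : y ∈ A <;> simp [h]
  have hE : ∀ (W : Set X), MeasurableSet W → ∀ g : Lp ℂ 2 μ,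
      ⇑(ℰ W g) =ᵐ[μ] μ[(φ ⁻¹' W).indicator ⇑g | MeasurableSpace.comap φ m0] := by
    intro W hW g
    have h := hℰ W hW g
    rwa [ind_eq] at h
  -- conditional expectation is an L² contraction on integrable ∩ L² functions
  have contraction : ∀ (h : X → ℂ), Integrable h μ → MemLp h 2 μ →
      eLpNorm (μ[h|MeasurableSpace.comap φ m0]) 2 μ ≤ eLpNorm h 2 μ := by
    intro h hint h2
    have hL2 : (condExpL2 ℂ ℂ hm (h2.toLp h) : X → ℂ) =ᵐ[μ] μ[h|MeasurableSpace.comap φ m0] := by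
      refine ae_eq_condExp_of_forall_setIntegral_eq hm hint
        (fun s hs hμs => integrableOn_condExpL2_of_measure_ne_top hm hμs.ne _)
        (fun s hs hμs => ?_)
        (aestronglyMeasurable_condExpL2 hm _)
      rw [integral_condExpL2_eq hm (h2.toLp h) hs hμs.ne]
      exact setIntegral_congr_ae (hm s hs) ((h2.coeFn_toLp).mono fun x hx _ => hx)
    calc eLpNorm (μ[h|MeasurableSpace.comap φ m0]) 2 μ
        = eLpNorm (condExpL2 ℂ ℂ hm (h2.toLp h) : X → ℂ) 2 μ := (eLpNorm_congr_ae hL2).symm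
      _ ≤ eLpNorm (⇑(h2.toLp h)) 2 μ := eLpNorm_condExpL2_le hm _
      _ = eLpNorm h 2 μ := eLpNorm_congr_ae h2.coeFn_toLp
  -- ℰ W is a contraction on integrable elements of L²
  have norm_le_int : ∀ (W : Set X), MeasurableSet W → ∀ g : Lp ℂ 2 μ, Integrable ⇑g μ →
      ‖ℰ W g‖ ≤ ‖g‖ := by
    intro W hW g hg
    have hWm0 : MeasurableSet (φ ⁻¹' W) := hφ hW
    have h1 : eLpNorm (⇑(ℰ W g)) 2 μ ≤ eLpNorm (⇑g) 2 μ := by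
      calc eLpNorm (⇑(ℰ W g)) 2 μ
          = eLpNorm (μ[(φ ⁻¹' W).indicator ⇑g|MeasurableSpace.comap φ m0]) 2 μ := eLpNorm_congr_ae (hE W hW g)
        _ ≤ eLpNorm ((φ ⁻¹' W).indicator ⇑g) 2 μ :=
            contraction _ (hg.indicator hWm0) ((Lp.memLp g).indicator hWm0)
        _ ≤ eLpNorm (⇑g) 2 μ := eLpNorm_indicator_le _
    rw [Lp.norm_def, Lp.norm_def]
    exact ENNReal.toReal_mono (Lp.eLpNorm_ne_top g) h1
  -- integrable elements of L² are dense
  have hdense : Dense {g : Lp ℂ 2 μ | Integrable ⇑g μ} := by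
    have h1 : Dense (Lp.simpleFunc ℂ 2 μ : Set (Lp ℂ 2 μ)) :=
      Lp.simpleFunc.dense (by norm_num)
    refine Dense.mono ?_ h1
    rintro g hg
    have hmem : MemLp (Lp.simpleFunc.toSimpleFunc (⟨g, hg⟩ : Lp.simpleFunc ℂ 2 μ)) 2 μ :=
      Lp.simpleFunc.memLp ⟨g, hg⟩
    have hint : Integrable (Lp.simpleFunc.toSimpleFunc (⟨g, hg⟩ : Lp.simpleFunc ℂ 2 μ)) μ :=
      (SimpleFunc.memLp_iff_integrable (by norm_num) (by norm_num)).mp hmem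
    exact hint.congr (Lp.simpleFunc.toSimpleFunc_eq_toFun ⟨g, hg⟩)
  -- ℰ W is a contraction everywhere
  have norm_le : ∀ (W : Set X), MeasurableSet W → ∀ g : Lp ℂ 2 μ, ‖ℰ W g‖ ≤ ‖g‖ := by
    intro W hW g
    have hclosed : IsClosed {g : Lp ℂ 2 μ | ‖ℰ W g‖ ≤ ‖g‖} :=
      isClosed_le (continuous_norm.comp (ℰ W).continuous) continuous_norm
    have hsub : {g : Lp ℂ 2 μ | Integrable ⇑g μ} ⊆ {g | ‖ℰ W g‖ ≤ ‖g‖} :=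
      fun g hg => norm_le_int W hW g hg
    exact (hclosed.closure_subset_iff.mpr hsub) (by rw [hdense.closure_eq]; trivial)
  -- coeFn of finite sums
  have coeFn_sum : ∀ (N : ℕ) (G : ℕ → Lp ℂ 2 μ),
      ⇑(∑ n ∈ Finset.range N, G n) =ᵐ[μ] fun x => ∑ n ∈ Finset.range N, G n x := by
    intro N G
    induction N with
    | zero =>
        simp only [Finset.range_zero, Finset.sum_empty]
        filter_upwards [Lp.coeFn_zero ℂ 2 μ] with x hx
        simpa using hx
    | succ N ih =>
        rw [Finset.sum_range_succ]
        filter_upwards [Lp.coeFn_add (∑ n ∈ Finset.range N, G n) (G N), ih] with x hx hx2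
        simp only [Finset.sum_range_succ, hx, Pi.add_apply, hx2]
  set U : ℕ → Set X := fun N => ⋃ n ∈ Finset.range N, S n with hU_def
  have hU : ∀ N, MeasurableSet (U N) :=
    fun N => (Finset.range N).measurableSet_biUnion fun n _ => hS n
  have hUnion : MeasurableSet (⋃ n, S n) := MeasurableSet.iUnion hS
  -- sums of indicators of preimages
  have ind_sum : ∀ (N : ℕ) (g : X → ℂ) (x : X),
      ∑ n ∈ Finset.range N, (φ ⁻¹' S n).indicator g x = (φ ⁻¹' U N).indicator g x := by
    intro N g x
    by_cases hx : x ∈ φ ⁻¹' U N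
    · obtain ⟨k, hkN, hxk⟩ : ∃ k ∈ Finset.range N, φ x ∈ S k := by
        simpa [hU_def] using hx
      rw [Set.indicator_of_mem hx, Finset.sum_eq_single_of_mem k hkN]
      · exact Set.indicator_of_mem (show x ∈ φ ⁻¹' S k from hxk) g
      · intro n hn hne
        refine Set.indicator_of_notMem (fun hxn => ?_) g
        exact Set.disjoint_left.mp (hdisj hne) hxn hxk
    · rw [Set.indicator_of_notMem hx]
      refine Finset.sum_eq_zero fun n hn => Set.indicator_of_notMem (fun hxn => hx ?_) g
      exact Set.mem_preimage.mpr (Set.mem_biUnion hn hxn)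
  -- finite additivity
  have hadd : ∀ (N : ℕ) (g : Lp ℂ 2 μ),
      ∑ n ∈ Finset.range N, ℰ (S n) g = ℰ (U N) g := by
    intro N
    have hsub : {g : Lp ℂ 2 μ | Integrable ⇑g μ} ⊆
        {g | ∑ n ∈ Finset.range N, ℰ (S n) g = ℰ (U N) g} := by
      intro g hg
      refine Lp.ext ?_
      have h4 : (∑ n ∈ Finset.range N, (φ ⁻¹' S n).indicator ⇑g) = (φ ⁻¹' U N).indicator ⇑g := by
        funext x
        simpa using ind_sum N (⇑g) x
      have h3 : μ[(φ ⁻¹' U N).indicator ⇑g|MeasurableSpace.comap φ m0] =ᵐ[μ]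
          ∑ n ∈ Finset.range N, μ[(φ ⁻¹' S n).indicator ⇑g|MeasurableSpace.comap φ m0] := by
        rw [← h4]
        exact condExp_finsetSum (fun n _ => hg.indicator (hφ (hS n))) _
      have h2 : ∀ᵐ x ∂μ, ∀ n ∈ Finset.range N,
          (ℰ (S n) g) x = (μ[(φ ⁻¹' S n).indicator ⇑g|MeasurableSpace.comap φ m0]) x :=
        (eventually_all_finset _).mpr fun n _ => hE (S n) (hS n) g
      filter_upwards [coeFn_sum N (fun n => ℰ (S n) g), h2, h3, hE (U N) (hU N) g] with x hx1
        hx2 hx3 hx5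
      rw [hx1, hx5, hx3, Finset.sum_apply]
      exact Finset.sum_congr rfl hx2
    intro g
    have hclosed : IsClosed {g : Lp ℂ 2 μ | ∑ n ∈ Finset.range N, ℰ (S n) g = ℰ (U N) g} :=
      isClosed_eq (continuous_finset_sum _ fun n _ => (ℰ (S n)).continuous) (ℰ (U N)).continuous
    exact (hclosed.closure_subset_iff.mpr hsub) (by rw [hdense.closure_eq]; trivial)
  -- tail convergence on integrable elements
  have htail : ∀ g : Lp ℂ 2 μ, Integrable ⇑g μ →
      Tendsto (fun N => ℰ (U N) g) atTop (𝓝 (ℰ (⋃ n, S n) g)) := by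
    intro g hg
    rw [tendsto_iff_norm_sub_tendsto_zero]
    set D : ℕ → Set X := fun N => ⋃ n, ⋃ (_ : N ≤ n), φ ⁻¹' S n with hD_def
    have hD_meas : ∀ N, MeasurableSet (D N) :=
      fun N => MeasurableSet.iUnion fun n => MeasurableSet.iUnion fun _ => hφ (hS n)
    have hDind : ∀ (N : ℕ) (x : X),
        (φ ⁻¹' ⋃ n, S n).indicator ⇑g x - (φ ⁻¹' U N).indicator ⇑g x
          = (D N).indicator ⇑g x := by
      intro N x
      by_cases hxU : x ∈ φ ⁻¹' U N
      · obtain ⟨k, hkN, hxk⟩ : ∃ k ∈ Finset.range N, φ x ∈ S k := by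
          simpa [hU_def] using hxU
        have hx1 : x ∈ φ ⁻¹' ⋃ n, S n := Set.mem_preimage.mpr (Set.mem_iUnion.mpr ⟨k, hxk⟩)
        have hx2 : x ∉ D N := by
          simp only [hD_def, Set.mem_iUnion, not_exists]
          intro n hn hxn
          have hne : n ≠ k := by
            rw [Finset.mem_range] at hkN
            omega
          exact Set.disjoint_left.mp (hdisj hne) hxn hxk
        rw [Set.indicator_of_mem hx1, Set.indicator_of_mem hxU,
          Set.indicator_of_notMem hx2, sub_self]
      · by_cases hx1 : x ∈ φ ⁻¹' ⋃ n, S n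
        · have hx2 : x ∈ D N := by
            obtain ⟨n, hxn⟩ := Set.mem_iUnion.mp (Set.mem_preimage.mp hx1)
            have hnN : N ≤ n := by
              by_contra hcon
              exact hxU (Set.mem_preimage.mpr
                (Set.mem_biUnion (Finset.mem_range.mpr (lt_of_not_ge hcon)) hxn))
            exact Set.mem_iUnion.mpr ⟨n, Set.mem_iUnion.mpr ⟨hnN, hxn⟩⟩
          rw [Set.indicator_of_mem hx1, Set.indicator_of_notMem hxU,
            Set.indicator_of_mem hx2, sub_zero]
        · have hx2 : x ∉ D N := by
            intro hcon
            obtain ⟨n, hn⟩ := Set.mem_iUnion.mp hcon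
            obtain ⟨_, hxn⟩ := Set.mem_iUnion.mp hn
            exact hx1 (Set.mem_preimage.mpr (Set.mem_iUnion.mpr ⟨n, hxn⟩))
          rw [Set.indicator_of_notMem hx1, Set.indicator_of_notMem hxU,
            Set.indicator_of_notMem hx2, sub_zero]
    have hbound : ∀ N, ‖ℰ (U N) g - ℰ (⋃ n, S n) g‖
        ≤ (eLpNorm ((D N).indicator ⇑g) 2 μ).toReal := by
      intro N
      have e2 : ((φ ⁻¹' ⋃ n, S n).indicator ⇑g - (φ ⁻¹' U N).indicator ⇑g)
          = (D N).indicator ⇑g := by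
        funext x
        simpa using hDind N x
      have e1 : μ[(φ ⁻¹' ⋃ n, S n).indicator ⇑g - (φ ⁻¹' U N).indicator ⇑g|MeasurableSpace.comap φ m0]
          =ᵐ[μ] μ[(φ ⁻¹' ⋃ n, S n).indicator ⇑g|MeasurableSpace.comap φ m0] - μ[(φ ⁻¹' U N).indicator ⇑g|MeasurableSpace.comap φ m0] :=
        condExp_sub (hg.indicator (hφ hUnion)) (hg.indicator (hφ (hU N))) _
      have hdiff : ⇑(ℰ (⋃ n, S n) g - ℰ (U N) g) =ᵐ[μ] μ[(D N).indicator ⇑g|MeasurableSpace.comap φ m0] := by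
        rw [← e2]
        filter_upwards [Lp.coeFn_sub (ℰ (⋃ n, S n) g) (ℰ (U N) g), hE _ hUnion g,
          hE _ (hU N) g, e1] with x h1 h2 h3 h4
        rw [h1, Pi.sub_apply, h2, h3, h4, Pi.sub_apply]
      have hfin : eLpNorm ((D N).indicator ⇑g) 2 μ ≠ ⊤ :=
        (lt_of_le_of_lt (eLpNorm_indicator_le _) (Lp.eLpNorm_lt_top g)).ne
      calc ‖ℰ (U N) g - ℰ (⋃ n, S n) g‖
          = ‖ℰ (⋃ n, S n) g - ℰ (U N) g‖ := norm_sub_rev _ _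
        _ = (eLpNorm (⇑(ℰ (⋃ n, S n) g - ℰ (U N) g)) 2 μ).toReal := Lp.norm_def _
        _ = (eLpNorm (μ[(D N).indicator ⇑g|MeasurableSpace.comap φ m0]) 2 μ).toReal := by
            rw [eLpNorm_congr_ae hdiff]
        _ ≤ (eLpNorm ((D N).indicator ⇑g) 2 μ).toReal :=
            ENNReal.toReal_mono hfin
              (contraction _ (hg.indicator (hD_meas N)) ((Lp.memLp g).indicator (hD_meas N)))
    -- the eLpNorms of the tails tend to 0
    set w : X → ℝ≥0∞ := fun x => (‖g x‖₊ : ℝ≥0∞) ^ (2 : ℝ) with hw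
    have hw_fin : ∫⁻ x, w x ∂μ ≠ ⊤ := by
      have h2 := Lp.eLpNorm_lt_top g
      rw [eLpNorm_eq_lintegral_rpow_enorm_toReal (by norm_num) (by norm_num)] at h2
      intro hcon
      rw [hw] at hcon
      simp only [ENNReal.toReal_ofNat, enorm_eq_nnnorm] at h2
      rw [hcon] at h2
      simp [ENNReal.top_rpow_of_pos] at h2
    have hcalc : ∀ N, eLpNorm ((D N).indicator ⇑g) 2 μ
        = (μ.withDensity w (D N)) ^ (1 / (2 : ℝ)) := by
      intro N
      rw [eLpNorm_eq_lintegral_rpow_enorm_toReal (by norm_num) (by norm_num),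
        withDensity_apply w (hD_meas N), ← lintegral_indicator (hD_meas N)]
      simp only [ENNReal.toReal_ofNat]
      congr 1
      refine lintegral_congr fun x => ?_
      by_cases hx : x ∈ D N
      · simp [hw, Set.indicator_of_mem hx]; rfl
      · simp [hw, Set.indicator_of_notMem hx, ENNReal.zero_rpow_of_pos, two_pos]
    have hanti : Antitone D := by
      intro N M hNM x hx
      obtain ⟨n, hn⟩ := Set.mem_iUnion.mp hx
      obtain ⟨hMn, hxn⟩ := Set.mem_iUnion.mp hn
      exact Set.mem_iUnion.mpr ⟨n, Set.mem_iUnion.mpr ⟨le_trans hNM hMn, hxn⟩⟩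
    have h_inter : ⋂ N, D N = ∅ := by
      ext x
      simp only [Set.mem_iInter, Set.mem_empty_iff_false, iff_false]
      intro hcon
      obtain ⟨n₀, hn₀⟩ := Set.mem_iUnion.mp (hcon 0)
      obtain ⟨_, hxn₀⟩ := Set.mem_iUnion.mp hn₀
      obtain ⟨n₁, hn₁⟩ := Set.mem_iUnion.mp (hcon (n₀ + 1))
      obtain ⟨hn₁ge, hxn₁⟩ := Set.mem_iUnion.mp hn₁
      have hne : n₀ ≠ n₁ := by omega
      exact Set.disjoint_left.mp (hdisj hne) hxn₀ hxn₁
    have hD0fin : μ.withDensity w (D 0) ≠ ⊤ := by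
      refine ne_top_of_le_ne_top ?_ (measure_mono (Set.subset_univ _))
      rw [withDensity_apply w MeasurableSet.univ, Measure.restrict_univ]
      exact hw_fin
    have hν0 : Tendsto (fun N => μ.withDensity w (D N)) atTop (𝓝 0) := by
      have h := tendsto_measure_iInter_atTop (μ := μ.withDensity w)
        (fun N => (hD_meas N).nullMeasurableSet) hanti ⟨0, hD0fin⟩
      rw [h_inter] at h
      simpa [Function.comp_def] using h
    have hν : Tendsto (fun N => eLpNorm ((D N).indicator ⇑g) 2 μ) atTop (𝓝 0) := by
      have hcont : Tendsto (fun z : ℝ≥0∞ => z ^ (1 / (2 : ℝ))) (𝓝 0) (𝓝 0) := by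
        have := (ENNReal.continuous_rpow_const (y := 1 / (2 : ℝ))).tendsto 0
        simpa [ENNReal.zero_rpow_of_pos, one_div] using this
      have := hcont.comp hν0
      refine Tendsto.congr (fun N => (hcalc N).symm) this
    have htoReal : Tendsto (fun N => (eLpNorm ((D N).indicator ⇑g) 2 μ).toReal) atTop (𝓝 0) := by
      have := (ENNReal.tendsto_toReal (by simp)).comp hν
      simpa [Function.comp_def] using this
    exact squeeze_zero (fun N => norm_nonneg _) hbound htoReal
  -- final ε/3 argument
  intro f
  rw [Metric.tendsto_atTop]
  intro ε hε
  obtain ⟨g, hg_mem, hgf⟩ := hdense.exists_dist_lt f (show (0 : ℝ) < ε / 3 by positivity)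
  have hgint : Integrable ⇑g μ := hg_mem
  have htg := htail g hgint
  rw [Metric.tendsto_atTop] at htg
  obtain ⟨N₀, hN₀⟩ := htg (ε / 3) (by positivity)
  refine ⟨N₀, fun N hN => ?_⟩
  rw [hadd N f, dist_eq_norm]
  have hdecomp : ℰ (U N) f - ℰ (⋃ n, S n) f
      = ℰ (U N) (f - g) + (ℰ (U N) g - ℰ (⋃ n, S n) g) + ℰ (⋃ n, S n) (g - f) := by
    simp only [map_sub]
    abel
  have h1 : ‖ℰ (U N) f - ℰ (⋃ n, S n) f‖
      ≤ ‖ℰ (U N) (f - g)‖ + ‖ℰ (U N) g - ℰ (⋃ n, S n) g‖ + ‖ℰ (⋃ n, S n) (g - f)‖ := by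
    rw [hdecomp]
    exact norm_add₃_le
  have h2 : ‖ℰ (U N) (f - g)‖ ≤ ‖f - g‖ := norm_le _ (hU N) _
  have h3 : ‖ℰ (⋃ n, S n) (g - f)‖ ≤ ‖g - f‖ := norm_le _ hUnion _
  have h4 := hN₀ N hN
  rw [dist_eq_norm] at h4 hgf
  have h5 : ‖g - f‖ = ‖f - g‖ := norm_sub_rev _ _
  calc ‖ℰ (U N) f - ℰ (⋃ n, S n) f‖
      ≤ ‖ℰ (U N) (f - g)‖ + ‖ℰ (U N) g - ℰ (⋃ n, S n) g‖ + ‖ℰ (⋃ n, S n) (g - f)‖ := h1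
    _ < ε / 3 + ε / 3 + ε / 3 := by
        have := h2.trans_lt hgf
        have := h3.trans_lt (h5 ▸ hgf)
        linarith
    _ = ε := by ring
end
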